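/- arXiv:2308.06574 — 5 statements merged into one kernel-verified Lean document; each statement's English description precedes it below -/
import Mathlib

section
/- Let 𝒜 be a category with pullbacks and p : E → B a morphism. If p is a pullback-stable strong epimorphism, then the pullback functor p* : 𝒜/B → 𝒜/E reflects isomorphisms. -/
open CategoryTheory Limits

lemma strongEpi_fst_aux {𝒜 : Type*} [Category 𝒜] [HasPullbacks 𝒜] {E B : 𝒜} (p : E ⟶ B)
    (hp : ∀ ⦃Z : 𝒜⦄ (g : Z ⟶ B), StrongEpi (pullback.snd p g)) {Z : 𝒜} (g : Z ⟶ B) :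
    StrongEpi (pullback.fst g p) := by
  have h := hp g
  have : pullback.fst g p = (pullbackSymmetry p g).inv ≫ pullback.snd p g := by simp
  rw [this]
  exact strongEpi_comp _ _

/-- If `p : E ⟶ B` is a pullback-stable strong epimorphism, then the pullback functor
`p* : 𝒜/B ⥤ 𝒜/E` reflects isomorphisms. -/
theorem pullbackFunctor_reflectsIsos_of_pullbackStable_strongEpi
    {𝒜 : Type*} [Category 𝒜] [HasPullbacks 𝒜] {E B : 𝒜} (p : E ⟶ B)
    (hp : ∀ ⦃Z : 𝒜⦄ (g : Z ⟶ B), StrongEpi (pullback.snd p g)) :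
    (Over.pullback p).ReflectsIsomorphisms := by
  constructor
  intro X Y f hf
  -- it suffices to show f.left is iso
  suffices h : IsIso f.left by
    haveI : IsIso ((Over.forget B).map f) := h
    exact isIso_of_reflects_iso f (Over.forget B)
  have hX : StrongEpi (pullback.fst X.hom p) := strongEpi_fst_aux p hp X.hom
  have hY : StrongEpi (pullback.fst Y.hom p) := strongEpi_fst_aux p hp Y.hom
  have hil : IsIso ((Over.pullback p).map f).left := by
    exact (Over.forget E).map_isIso ((Over.pullback p).map f)
  -- strong epi: fst X ≫ f.left = (map f).left ≫ fst Y
  have hcomm : ((Over.pullback p).map f).left ≫ pullback.fst Y.hom p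
      = pullback.fst X.hom p ≫ f.left := by
    simp [Over.pullback]
    exact pullback.lift_fst _ _ _
  have hse : StrongEpi f.left := by
    have : StrongEpi (((Over.pullback p).map f).left ≫ pullback.fst Y.hom p) := by
      exact strongEpi_comp _ _
    rw [hcomm] at this
    exact strongEpi_of_strongEpi (pullback.fst X.hom p) f.left
  -- mono
  have hmono : Mono f.left := by
    constructor
    intro W a b hab
    have hw : a ≫ X.hom = b ≫ X.hom := by
      rw [← Over.w f, ← Category.assoc, ← Category.assoc, hab]
    set w : W ⟶ B := a ≫ X.hom with hwdef
    -- lifts to pullbacks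
    let a' : pullback w p ⟶ pullback X.hom p :=
      pullback.lift (pullback.fst w p ≫ a) (pullback.snd w p)
        (by rw [Category.assoc, ← hwdef, pullback.condition])
    let b' : pullback w p ⟶ pullback X.hom p :=
      pullback.lift (pullback.fst w p ≫ b) (pullback.snd w p)
        (by rw [Category.assoc, ← hw, pullback.condition])
    have h1 : a' ≫ ((Over.pullback p).map f).left = b' ≫ ((Over.pullback p).map f).left := by
      apply pullback.hom_ext <;> simp [a', b', Over.pullback, hab]
      · rw [pullback.lift_fst (f := Y.hom) (g := p) _ _ _]
        simp only [← Category.assoc, pullback.lift_fst (f := X.hom) (g := p)]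
        simp [hab]
      · rw [pullback.lift_snd (f := Y.hom) (g := p) _ _ _]
        simp only [pullback.lift_snd (f := X.hom) (g := p)]
    have h2 : a' = b' := by
      rwa [cancel_mono (((Over.pullback p).map f).left)] at h1
    have h3 : pullback.fst w p ≫ a = pullback.fst w p ≫ b := by
      have := congrArg (· ≫ pullback.fst X.hom p) h2
      simpa [a', b', pullback.lift_fst (f := X.hom) (g := p)] using this
    have : Epi (pullback.fst w p) := (strongEpi_fst_aux p hp w).epi
    exact (cancel_epi (pullback.fst w p)).mp h3
  exact isIso_of_mono_of_strongEpi f.left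
end

section
/- Let U : 𝒜 → 𝒳 be a functor between categories such that 𝒳 is pointed (has a zero object), 𝒜 has an initial object 0 and a terminal object 1, U has a left adjoint, U reflects isomorphisms, and U preserves monomorphisms, and suppose 𝒜 admits a factorization of the unique morphism 0 → 1 as a regular epimorphism followed by a monomorphism. Then the unique morphism 0 → 1 in 𝒜 is a regular epimorphism. -/
open CategoryTheory Limits

/-- Let `U : 𝒜 ⥤ 𝒳` be a functor into a pointed category which has a left adjoint,
reflects isomorphisms, and preserves monomorphisms, where `𝒜` has an initial and a
terminal object. If the unique morphism `0 ⟶ 1` of `𝒜` admits a (regular epi, mono)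
factorization, then it is a regular epimorphism. -/
theorem initial_to_terminal_regularEpi {𝒜 𝒳 : Type*} [Category 𝒜] [Category 𝒳]
    [HasZeroObject 𝒳] [HasInitial 𝒜] [HasTerminal 𝒜]
    (U : 𝒜 ⥤ 𝒳) [U.IsRightAdjoint] [U.ReflectsIsomorphisms] [U.PreservesMonomorphisms]
    (hfac : ∃ (Z : 𝒜) (e : (⊥_ 𝒜) ⟶ Z) (m : Z ⟶ (⊤_ 𝒜)),
      Nonempty (RegularEpi e) ∧ Mono m ∧ e ≫ m = initial.to (⊤_ 𝒜)) :
    Nonempty (RegularEpi (initial.to (⊤_ 𝒜))) := by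
  obtain ⟨Z, e, m, ⟨re⟩, hm, hcomp⟩ := hfac
  haveI := hm
  -- `U.obj (⊤_ 𝒜)` is terminal in `𝒳`
  have hterm : IsTerminal (U.obj (⊤_ 𝒜)) :=
    isLimitOfHasTerminalOfPreservesLimit U
  -- the zero object
  obtain ⟨O, hO⟩ := HasZeroObject.zero (C := 𝒳)
  -- section of `U.map m`
  let s : U.obj (⊤_ 𝒜) ⟶ U.obj Z := (hO.isTerminal.from _) ≫ (hO.isInitial.to _)
  have hidm : s ≫ U.map m = 𝟙 _ := hterm.hom_ext _ _
  haveI : Mono (U.map m) := U.map_mono m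
  haveI : IsIso (U.map m) := by
    refine ⟨s, ?_, hidm⟩
    rw [← cancel_mono (U.map m), Category.assoc, hidm, Category.comp_id,
      Category.id_comp]
  haveI : IsIso m := isIso_of_reflects_iso m U
  -- transport the regular-epi structure along the iso `m`
  refine ⟨{ W := re.W, left := re.left, right := re.right, w := ?_, isColimit := ?_ }⟩
  · rw [← hcomp, re.w_assoc]
  · exact IsColimit.ofIsoColimit re.isColimit (Cofork.ext (asIso m) (by simpa using hcomp))
end

section
/- Let 𝒳 be a category with finite limits and finite coproducts, and let T = (T, η, μ) be a monad on 𝒳 that is essentially nullary, i.e., for each object X the canonical morphism [T(!_X), η_X] : T(0) + X → T(X) is a strong epimorphism, where !_X : 0 → X is the unique map from the initial object. Suppose (X₀, h₀) and (X₁, h₁) are T-algebras and X₀ --m--> X --n--> X₁ are morphisms in 𝒳 with n a monomorphism such that the composite n∘m is a morphism of T-algebras (X₀,h₀) → (X₁,h₁). Then there exists a unique T-algebra structure h : T(X) → X on X such that m : (X₀,h₀) → (X,h) and n : (X,h) → (X₁,h₁) are morphisms of T-algebras. -/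
open CategoryTheory Limits

/-- (Lemma 4.1) Let `T` be an essentially nullary monad on a category `𝒳` with finite
limits and finite coproducts. Given `T`-algebras `(X₀,h₀)`, `(X₁,h₁)` and morphisms
`X₀ --m--> X --n--> X₁` with `n` a monomorphism and `n ∘ m` a morphism of `T`-algebras,
`X` admits a unique `T`-algebra structure making `m` and `n` algebra morphisms. -/
theorem algebra_structure_lifting {𝒳 : Type*} [Category 𝒳]
    [HasFiniteLimits 𝒳] [HasFiniteCoproducts 𝒳] (T : Monad 𝒳)
    (hEN : ∀ Y : 𝒳, StrongEpi (coprod.desc (T.map (initial.to Y)) (T.η.app Y)))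
    (A₀ A₁ : T.Algebra) {X : 𝒳} (m : A₀.A ⟶ X) (n : X ⟶ A₁.A) [Mono n]
    (hmn : T.map (m ≫ n) ≫ A₁.a = A₀.a ≫ (m ≫ n)) :
    ∃! h : T.obj X ⟶ X,
      T.η.app X ≫ h = 𝟙 X ∧ T.μ.app X ≫ h = T.map h ≫ h ∧
        T.map m ≫ h = A₀.a ≫ m ∧ T.map n ≫ A₁.a = h ≫ n := by
  haveI := hEN X
  set e : T.obj (⊥_ 𝒳) ⨿ X ⟶ T.obj X :=
    coprod.desc (T.map (initial.to X)) (T.η.app X) with he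
  set u : T.obj (⊥_ 𝒳) ⨿ X ⟶ X :=
    coprod.desc (T.map (initial.to A₀.A) ≫ A₀.a ≫ m) (𝟙 X) with hu
  set v : T.obj X ⟶ A₁.A := T.map n ≫ A₁.a with hv
  have sq : CommSq u e n v := by
    constructor
    apply coprod.hom_ext
    · simp only [hu, he, hv, coprod.inl_desc_assoc, Category.assoc]
      rw [← hmn, ← Functor.map_comp_assoc, ← Functor.map_comp_assoc]
      congr 2
      apply initial.hom_ext
    · simp only [hu, he, hv, coprod.inr_desc_assoc, Category.id_comp]
      rw [← T.η.naturality_assoc, A₁.unit]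
      simp
  have key : ∀ f g : T.obj X ⟶ X, f ≫ n = g ≫ n → f = g := fun f g hfg =>
    (cancel_mono n).1 hfg
  refine ⟨sq.lift, ⟨?_, ?_, ?_, ?_⟩, ?_⟩
  · -- unit law
    rw [← cancel_mono n]
    rw [Category.assoc, sq.fac_right, hv, ← T.η.naturality_assoc, A₁.unit]
    simp
  · -- multiplication law
    rw [← cancel_mono n]
    rw [Category.assoc, sq.fac_right, Category.assoc, sq.fac_right]
    simp only [hv]
    rw [← T.μ.naturality_assoc, A₁.assoc, Functor.comp_map, ← Functor.map_comp_assoc]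
    have hvn : T.map n ≫ A₁.a = sq.lift ≫ n := by rw [sq.fac_right]
    rw [← Functor.map_comp_assoc]
    exact congrArg (fun t => T.map t ≫ A₁.a) hvn
  · -- m is an algebra morphism
    rw [← cancel_mono n]
    rw [Category.assoc, sq.fac_right, hv, ← Functor.map_comp_assoc, hmn]
    simp
  · exact sq.fac_right.symm
  · -- uniqueness
    rintro h' ⟨-, -, -, h4⟩
    exact key h' sq.lift (by rw [sq.fac_right]; exact h4.symm)
end

section
/- Let 𝒳 be a category with finite limits and finite coproducts and T an essentially nullary monad on 𝒳. Let (X, h) be a T-algebra and R ⇉ X a reflexive relation on X, given by a monomorphism ⟨r₁,r₂⟩ : R → X × X together with a common section e : X → R of r₁ and r₂ (so r₁∘e = r₂∘e = 1_X). Then R admits a unique T-algebra structure k : T(R) → R making r₁, r₂ : (R,k) → (X,h) and e : (X,h) → (R,k) morphisms of T-algebras. -/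
open CategoryTheory Limits

/-- (Corollary 4.2) Let `T` be an essentially nullary monad on a category `𝒳` with finite
limits and finite coproducts, `(X,h)` a `T`-algebra, and `R ⇉ X` a reflexive relation on
`X`. Then `R` admits a unique `T`-algebra structure making `r₁`, `r₂` and `e` morphisms
of `T`-algebras. -/
theorem reflexive_relation_homomorphic {𝒳 : Type*} [Category 𝒳]
    [HasFiniteLimits 𝒳] [HasFiniteCoproducts 𝒳] (T : Monad 𝒳)
    (hEN : ∀ Y : 𝒳, StrongEpi (coprod.desc (T.map (initial.to Y)) (T.η.app Y)))
    (A : T.Algebra) {R : 𝒳} (r₁ r₂ : R ⟶ A.A) (e : A.A ⟶ R)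
    [Mono (prod.lift r₁ r₂)] (he₁ : e ≫ r₁ = 𝟙 A.A) (he₂ : e ≫ r₂ = 𝟙 A.A) :
    ∃! k : T.obj R ⟶ R,
      T.η.app R ≫ k = 𝟙 R ∧ T.μ.app R ≫ k = T.map k ≫ k ∧
        T.map r₁ ≫ A.a = k ≫ r₁ ∧ T.map r₂ ≫ A.a = k ≫ r₂ ∧
        T.map e ≫ k = A.a ≫ e := by
  set m : R ⟶ A.A ⨯ A.A := prod.lift r₁ r₂ with hm
  set φ : T.obj R ⟶ A.A ⨯ A.A := prod.lift (T.map r₁ ≫ A.a) (T.map r₂ ≫ A.a) with hφ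
  set σ : T.obj (⊥_ 𝒳) ⨿ R ⟶ T.obj R := coprod.desc (T.map (initial.to R)) (T.η.app R)
    with hσ
  haveI : StrongEpi σ := hEN R
  set f : T.obj (⊥_ 𝒳) ⨿ R ⟶ R := coprod.desc (T.map (initial.to A.A) ≫ A.a ≫ e) (𝟙 R)
    with hf
  have hem : e ≫ m = prod.lift (𝟙 A.A) (𝟙 A.A) := by
    rw [hm, prod.comp_lift, he₁, he₂]
  have sq : CommSq f σ m φ := by
    constructor
    apply coprod.hom_ext
    · rw [hf, hσ]
      simp only [coprod.inl_desc_assoc, Category.assoc, hem, hφ, prod.comp_lift]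
      have h₁ : initial.to R ≫ r₁ = initial.to A.A := initial.to_comp r₁
      have h₂ : initial.to R ≫ r₂ = initial.to A.A := initial.to_comp r₂
      rw [← T.map_comp_assoc, ← T.map_comp_assoc, h₁, h₂]
      simp [prod.comp_lift]
    · rw [hf, hσ]
      simp only [coprod.inr_desc_assoc, Category.id_comp, hφ, prod.comp_lift]
      rw [← T.η.naturality_assoc r₁, ← T.η.naturality_assoc r₂]
      simp [A.unit, hm]
  obtain ⟨k, hfl, hfr⟩ : ∃ k, σ ≫ k = f ∧ k ≫ m = φ := ⟨sq.lift, sq.fac_left, sq.fac_right⟩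
  clear_value m φ σ f
  have hk₁ : T.map r₁ ≫ A.a = k ≫ r₁ := by
    have := hfr =≫ prod.fst
    rw [hm, hφ] at this
    rw [Category.assoc, prod.lift_fst, prod.lift_fst] at this
    exact this.symm
  have hk₂ : T.map r₂ ≫ A.a = k ≫ r₂ := by
    have := hfr =≫ prod.snd
    rw [hm, hφ] at this
    rw [Category.assoc, prod.lift_snd, prod.lift_snd] at this
    exact this.symm
  refine ⟨k, ⟨?_, ?_, hk₁, hk₂, ?_⟩, ?_⟩
  · have h := coprod.inr ≫= hfl
    rw [hσ, hf] at h
    rw [coprod.inr_desc_assoc, coprod.inr_desc] at h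
    exact h
  · rw [← cancel_mono m]
    rw [Category.assoc, Category.assoc, hfr, hφ, prod.comp_lift, prod.comp_lift]
    rw [← T.μ.naturality_assoc r₁, ← T.μ.naturality_assoc r₂]
    congr 1
    · rw [Functor.comp_map, ← Functor.map_comp_assoc, ← hk₁,
        Functor.map_comp, Category.assoc, ← A.assoc]
    · rw [Functor.comp_map, ← Functor.map_comp_assoc, ← hk₂,
        Functor.map_comp, Category.assoc, ← A.assoc]
  · rw [← cancel_mono m]
    rw [Category.assoc, hfr, hφ, prod.comp_lift, Category.assoc, hem, prod.comp_lift]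
    rw [← T.map_comp_assoc, ← T.map_comp_assoc, he₁, he₂]
    simp
  · rintro k' ⟨-, -, h₁, h₂, -⟩
    rw [← cancel_mono m, hfr, hφ, hm, prod.comp_lift, ← h₁, ← h₂]
end

section
/- Let (F ⊣ U, η, ε) : 𝒳 → 𝒜 be an adjunction between categories with pullbacks, where 𝒳 is pointed (has a zero object 0). Then the unit η is a cartesian natural transformation if and only if for every object X of 𝒳 the square with sides η_X : X → UF(X), !^X : X → 0, UF(!^X) : UF(X) → UF(0), and η_0 : 0 → UF(0) is a pullback, equivalently η_X is a kernel of UF(!^X) : UF(X) → UF(0). -/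
open CategoryTheory Limits

/-- For an adjunction `F ⊣ U` with pointed domain `𝒳`, the unit `η` is cartesian (all
naturality squares are pullbacks) if and only if for every object `X` the naturality
square at `!^X : X ⟶ 0` is a pullback, i.e. `η_X` is a kernel of `UF(!^X)`. -/
theorem unit_cartesian_iff_pullback_at_terminal {𝒳 𝒜 : Type*} [Category 𝒳] [Category 𝒜]
    [HasZeroObject 𝒳] [HasPullbacks 𝒳] [HasPullbacks 𝒜]
    (F : 𝒳 ⥤ 𝒜) (U : 𝒜 ⥤ 𝒳) (adj : F ⊣ U) :
    (∀ {X Y : 𝒳} (f : X ⟶ Y),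
        IsPullback f (adj.unit.app X) (adj.unit.app Y) ((F ⋙ U).map f)) ↔
      (∀ X : 𝒳,
        IsPullback (terminal.from X) (adj.unit.app X) (adj.unit.app (⊤_ 𝒳))
          ((F ⋙ U).map (terminal.from X))) := by
  constructor
  · intro h X
    exact h (terminal.from X)
  · intro h X Y f
    have hX := h X
    have hcomp : terminal.from X = f ≫ terminal.from Y := Subsingleton.elim _ _
    rw [hcomp, Functor.map_comp] at hX
    exact IsPullback.of_right hX (adj.unit.naturality f) (h Y)
end
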